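/- Let L be an irreducible weight-balanced n×n Laplacian (L𝟙 = Lᵀ𝟙 = 0, off-diagonal entries ≤ 0, and the symmetric part L + Lᵀ is positive semidefinite with kernel exactly span(𝟙)). Let Φ, Σ, Δ be diagonal positive matrices, γ ∈ ℝⁿ, and η = 𝟙ᵀx₀/n. Then for the time-varying Lyapunov function V(t,x) = (x - η𝟙)ᵀ(I + Φe^{-Σt})(x - η𝟙), evaluated along solutions of ẋ = -L(I + Φe^{-Σt})(x + e^{-Δt}γ) with 𝟙ᵀx₀ = nη, there exist a > 0, b > 0, c > 0 and δ > 0 such that V̇ ≤ -a‖x - η𝟙‖² + b‖x - η𝟙‖e^{-δt} + c·e^{-δt} for all t ≥ 0. -/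

import Mathlib

open Real Filter Matrix

open Finset

private lemma dot_transpose {n : ℕ} (L : Matrix (Fin n) (Fin n) ℝ) (u : Fin n → ℝ) :
    u ⬝ᵥ Lᵀ.mulVec u = u ⬝ᵥ L.mulVec u := by
  simp only [Matrix.mulVec, dotProduct, Matrix.transpose_apply, Finset.mul_sum]
  rw [Finset.sum_comm]
  apply Finset.sum_congr rfl; intro i _; apply Finset.sum_congr rfl; intro j _; ring

private lemma dot_symmS {n : ℕ} (S : Matrix (Fin n) (Fin n) ℝ) (hS : Sᵀ = S)
    (w z : Fin n → ℝ) : w ⬝ᵥ S.mulVec z = z ⬝ᵥ S.mulVec w := by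
  conv_lhs => rw [← hS]
  simp only [Matrix.mulVec, dotProduct, Matrix.transpose_apply, Finset.mul_sum]
  rw [Finset.sum_comm]
  apply Finset.sum_congr rfl; intro i _; apply Finset.sum_congr rfl; intro j _; ring

private lemma psd_ker {n : ℕ} (S : Matrix (Fin n) (Fin n) ℝ) (hS : Sᵀ = S)
    (hpsd : ∀ z : Fin n → ℝ, 0 ≤ z ⬝ᵥ S.mulVec z)
    (z : Fin n → ℝ) (hz : z ⬝ᵥ S.mulVec z = 0) : S.mulVec z = 0 := by
  have key : ∀ w : Fin n → ℝ, w ⬝ᵥ S.mulVec z = 0 := by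
    intro w
    set α := w ⬝ᵥ S.mulVec w with hα
    set β := w ⬝ᵥ S.mulVec z with hβ
    have hα0 : 0 ≤ α := hpsd w
    have hq : ∀ t : ℝ, 0 ≤ α * t ^ 2 + 2 * β * t := by
      intro t
      have h := hpsd (z + t • w)
      rw [Matrix.mulVec_add, Matrix.mulVec_smul, dotProduct_add, add_dotProduct,
        add_dotProduct, dotProduct_smul, smul_dotProduct, smul_dotProduct,
        dotProduct_smul, hz, dot_symmS S hS z w] at h
      simp only [smul_eq_mul] at h
      nlinarith [h]
    have h1 := hq (-β / (α + 1))
    have h2 : (0:ℝ) < α + 1 := by linarith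
    have h3 : α * (-β / (α + 1)) ^ 2 + 2 * β * (-β / (α + 1))
        = -(β ^ 2 * (α + 2)) / ((α + 1) ^ 2) := by
      field_simp; ring
    rw [h3] at h1
    have h4 : β ^ 2 * (α + 2) ≤ 0 := by
      by_contra hc
      push_neg at hc
      have := div_pos hc (by positivity : (0:ℝ) < (α + 1) ^ 2)
      rw [neg_div] at h1
      linarith
    nlinarith [sq_nonneg β]
  funext i
  have := key (Pi.single i 1)
  simpa [dotProduct, Pi.single_apply] using this

private lemma exists_lam {n : ℕ} (hn : 0 < n) (S : Matrix (Fin n) (Fin n) ℝ) (hS : Sᵀ = S)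
    (hpsd : ∀ z : Fin n → ℝ, 0 ≤ z ⬝ᵥ S.mulVec z)
    (hker : ∀ z : Fin n → ℝ, S.mulVec z = 0 ↔ ∃ cst : ℝ, z = fun _ => cst) :
    ∃ lam : ℝ, 0 < lam ∧ ∀ z : Fin n → ℝ, (∑ i, z i) = 0 →
      lam * (∑ i, (z i) ^ 2) ≤ z ⬝ᵥ S.mulVec z := by
  classical
  set f : (Fin n → ℝ) → ℝ := fun z => z ⬝ᵥ S.mulVec z with hf
  have hfc : Continuous f := by
    simp only [hf, dotProduct, Matrix.mulVec]
    exact continuous_finset_sum _ fun i _ => (continuous_apply i).mul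
      (continuous_finset_sum _ fun j _ => continuous_const.mul (continuous_apply j))
  have hscale : ∀ (c : ℝ) (z : Fin n → ℝ), f (c • z) = c ^ 2 * f z := by
    intro c z
    simp only [hf]
    rw [Matrix.mulVec_smul, dotProduct_smul, smul_dotProduct]
    simp [smul_eq_mul]; ring
  set T : Set (Fin n → ℝ) := {z | (∑ i, z i) = 0 ∧ (∑ i, (z i) ^ 2) = 1} with hT
  by_cases hne : T.Nonempty
  · have hclosed : IsClosed T := by
      apply IsClosed.inter
      · exact isClosed_eq (continuous_finset_sum _ fun i _ => continuous_apply i) continuous_const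
      · exact isClosed_eq (continuous_finset_sum _ fun i _ => (continuous_apply i).pow 2)
          continuous_const
    have hsub : T ⊆ Metric.closedBall 0 1 := by
      intro z hz
      rw [Metric.mem_closedBall, dist_zero_right]
      rw [pi_norm_le_iff_of_nonneg (by norm_num : (0:ℝ) ≤ 1)]
      intro i
      have h1 : (z i) ^ 2 ≤ 1 := by
        rw [← hz.2]
        exact Finset.single_le_sum (fun j _ => sq_nonneg (z j)) (Finset.mem_univ i)
      rw [Real.norm_eq_abs]
      nlinarith [abs_nonneg (z i), sq_abs (z i)]
    have hcomp : IsCompact T := (isCompact_closedBall 0 1).of_isClosed_subset hclosed hsub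
    obtain ⟨z₀, hz₀T, hmin⟩ := hcomp.exists_isMinOn hne hfc.continuousOn
    refine ⟨f z₀, ?_, ?_⟩
    · rcases lt_or_eq_of_le (hpsd z₀) with h | h
      · exact h
      · exfalso
        have hz0 : S.mulVec z₀ = 0 := psd_ker S hS hpsd z₀ h.symm
        obtain ⟨cst, hc⟩ := (hker z₀).1 hz0
        have hs := hz₀T.1
        rw [hc] at hs
        simp [Finset.sum_const, Finset.card_univ] at hs
        have hcst : cst = 0 := by
          rcases hs with hs | hs
          · exact absurd hs (by exact_mod_cast hn.ne')
          · exact hs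
        have := hz₀T.2
        rw [hc, hcst] at this
        simp at this
    · intro z hzsum
      rcases eq_or_lt_of_le (Finset.sum_nonneg fun i _ => sq_nonneg (z i)) with h | h
      · rw [← h]; simpa using hpsd z
      · set r := ∑ i, (z i) ^ 2 with hr
        have hrpos : 0 < r := h
        have hsq : Real.sqrt r > 0 := Real.sqrt_pos.mpr hrpos
        set z' := (Real.sqrt r)⁻¹ • z with hz'
        have hz'T : z' ∈ T := by
          constructor
          · simp only [hz', Pi.smul_apply, smul_eq_mul, ← Finset.mul_sum, hzsum, mul_zero]
          · simp only [hz', Pi.smul_apply, smul_eq_mul, mul_pow, ← Finset.mul_sum, ← hr]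
            rw [← Real.sq_sqrt hrpos.le]
            field_simp
            rw [Real.sqrt_sq (Real.sqrt_nonneg _)]
        have h1 : f z₀ ≤ f z' := hmin hz'T
        have h2 : f z' = r⁻¹ * f z := by
          rw [hz', hscale]
          congr 1
          rw [← Real.sq_sqrt hrpos.le]
          field_simp
          rw [Real.sqrt_sq (Real.sqrt_nonneg _)]
        rw [h2] at h1
        have : f z₀ * r ≤ f z := by
          have h3 := mul_le_mul_of_nonneg_right h1 hrpos.le
          calc f z₀ * r ≤ r⁻¹ * f z * r := h3
            _ = f z := by field_simp
        linarith
  · refine ⟨1, one_pos, ?_⟩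
    intro z hzsum
    have hz2 : (∑ i, (z i) ^ 2) = 0 := by
      by_contra hne2
      have hpos : 0 < ∑ i, (z i) ^ 2 :=
        lt_of_le_of_ne (Finset.sum_nonneg fun i _ => sq_nonneg _) (Ne.symm hne2)
      apply hne
      set r := ∑ i, (z i) ^ 2 with hr
      refine ⟨(Real.sqrt r)⁻¹ • z, ?_, ?_⟩
      · simp only [Pi.smul_apply, smul_eq_mul, ← Finset.mul_sum, hzsum, mul_zero]
      · simp only [Pi.smul_apply, smul_eq_mul, mul_pow, ← Finset.mul_sum, ← hr]
        rw [← Real.sq_sqrt hpos.le]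
        have := Real.sqrt_pos.mpr hpos
        field_simp
        rw [Real.sqrt_sq (Real.sqrt_nonneg _)]
    rw [hz2, mul_zero]
    exact hpsd z

set_option maxHeartbeats 1000000 in
/-- Key Lyapunov estimate in Theorem 3 (privacy-preserving average consensus): along
solutions of the masked consensus system, the time-varying Lyapunov function
`V(t,x) = (x-η𝟙)ᵀ(I+Φe^{-Σt})(x-η𝟙)` has derivative bounded by
`-a‖x-η𝟙‖² + b‖x-η𝟙‖e^{-δt} + c e^{-δt}`. -/
theorem stmt12 {n : ℕ} (hn : 0 < n) (L : Matrix (Fin n) (Fin n) ℝ)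
    (hrow : ∀ i, ∑ j, L i j = 0) (hcol : ∀ j, ∑ i, L i j = 0)
    (hoff : ∀ i j, i ≠ j → L i j ≤ 0)
    (hpsd : ∀ z : Fin n → ℝ, 0 ≤ z ⬝ᵥ (L + Lᵀ).mulVec z)
    (hker : ∀ z : Fin n → ℝ, (L + Lᵀ).mulVec z = 0 ↔ ∃ cst : ℝ, z = fun _ => cst)
    (Φ Sg Δ γ : Fin n → ℝ)
    (hΦ : ∀ i, 0 < Φ i) (hSg : ∀ i, 0 < Sg i) (hΔ : ∀ i, 0 < Δ i)
    (η : ℝ) :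
    ∃ a b c δ : ℝ, 0 < a ∧ 0 < b ∧ 0 < c ∧ 0 < δ ∧
      ∀ x : ℝ → Fin n → ℝ,
        (∀ t, HasDerivAt x
          (-(L.mulVec fun i =>
            (1 + Φ i * Real.exp (-Sg i * t)) * (x t i + Real.exp (-Δ i * t) * γ i))) t) →
        (∑ i, x 0 i = n * η) →
        ∀ t, 0 ≤ t →
          deriv (fun s => ∑ i, (1 + Φ i * Real.exp (-Sg i * s)) * (x s i - η) ^ 2) t ≤
            -a * (∑ i, (x t i - η) ^ 2) +
              b * Real.sqrt (∑ i, (x t i - η) ^ 2) * Real.exp (-δ * t) +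
              c * Real.exp (-δ * t) := by
  classical
  have hneF : (Finset.univ : Finset (Fin n)).Nonempty := ⟨⟨0, hn⟩, Finset.mem_univ _⟩
  have hSsym : (L + Lᵀ)ᵀ = L + Lᵀ := by
    rw [Matrix.transpose_add, Matrix.transpose_transpose, add_comm]
  obtain ⟨lam, hlam, hlamle⟩ := exists_lam hn (L + Lᵀ) hSsym hpsd hker
  set Bm := ∑ i, Φ i with hBm
  have hBm0 : 0 < Bm := Finset.sum_pos (fun i _ => hΦ i) hneF
  set K : ℝ := 1 + (1 + Bm) ^ 2 with hK
  have hKpos : 0 < K := by positivity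
  set Q : Fin n → ℝ := fun j => |η| * Φ j + (1 + Φ j) * |γ j| with hQ
  set R : Fin n → ℝ := fun i => ∑ j, |L i j| * Q j with hR
  set CR := Real.sqrt (∑ i, (R i) ^ 2) with hCR
  have hCR0 : 0 ≤ CR := Real.sqrt_nonneg _
  set δ := Finset.univ.inf' hneF (fun i => min (Sg i) (Δ i)) with hδdef
  have hδ : 0 < δ := (Finset.lt_inf'_iff hneF).2 fun i _ => lt_min (hSg i) (hΔ i)
  have hδS : ∀ i, δ ≤ Sg i := fun i =>
    le_trans (Finset.inf'_le _ (Finset.mem_univ i)) (min_le_left _ _)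
  have hδΔ : ∀ i, δ ≤ Δ i := fun i =>
    le_trans (Finset.inf'_le _ (Finset.mem_univ i)) (min_le_right _ _)
  refine ⟨lam / K, 2 * (1 + Bm) * CR + 1, 1, δ, by positivity, by positivity, one_pos, hδ, ?_⟩
  intro x hx hx0 t ht
  -- conservation of the sum
  have hcons : ∀ s, ∑ i, x s i = n * η := by
    have hdz : ∀ s : ℝ, HasDerivAt (fun r => ∑ i, x r i) 0 s := by
      intro s
      have h := hasDerivAt_pi.1 (hx s)
      have hsum := HasDerivAt.fun_sum (u := Finset.univ) fun i _ => h i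
      have h0 : (∑ i, (-(L.mulVec fun j =>
          (1 + Φ j * Real.exp (-Sg j * s)) * (x s j + Real.exp (-Δ j * s) * γ j))) i) = 0 := by
        set w : Fin n → ℝ := fun j =>
          (1 + Φ j * Real.exp (-Sg j * s)) * (x s j + Real.exp (-Δ j * s) * γ j)
        simp only [Pi.neg_apply, Matrix.mulVec, dotProduct]
        rw [Finset.sum_neg_distrib, neg_eq_zero, Finset.sum_comm]
        apply Finset.sum_eq_zero
        intro j _
        rw [← Finset.sum_mul, hcol j, zero_mul]
      rwa [h0] at hsum
    intro s
    have := is_const_of_deriv_eq_zero (fun r => (hdz r).differentiableAt)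
      (fun r => (hdz r).deriv) s 0
    rw [this, hx0]
  have hzsum : ∑ i, (x t i - η) = 0 := by
    rw [Finset.sum_sub_distrib, hcons t]
    simp [Finset.sum_const, Finset.card_univ, mul_comm]
  -- derivative of the Lyapunov function
  set d : Fin n → ℝ := -(L.mulVec fun j =>
      (1 + Φ j * Real.exp (-Sg j * t)) * (x t j + Real.exp (-Δ j * t) * γ j)) with hd
  have hxc : ∀ i, HasDerivAt (fun s => x s i) (d i) t := fun i => hasDerivAt_pi.1 (hx t) i
  have hFd : HasDerivAt (fun s => ∑ i, (1 + Φ i * Real.exp (-Sg i * s)) * (x s i - η) ^ 2)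
      (∑ i, (-(Φ i * Sg i * Real.exp (-Sg i * t)) * (x t i - η) ^ 2
        + (1 + Φ i * Real.exp (-Sg i * t)) * (2 * (x t i - η) * d i))) t := by
    apply HasDerivAt.fun_sum
    intro i _
    have h1 : HasDerivAt (fun s : ℝ => -Sg i * s) (-Sg i * 1) t :=
      (hasDerivAt_id t).const_mul (-Sg i)
    have hm : HasDerivAt (fun s => 1 + Φ i * Real.exp (-Sg i * s))
        (Φ i * (Real.exp (-Sg i * t) * (-Sg i * 1))) t :=
      ((h1.exp).const_mul (Φ i)).const_add 1
    have hz2 : HasDerivAt (fun s => (x s i - η) ^ 2)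
        ((2 : ℕ) * (x t i - η) ^ (2 - 1) * d i) t := ((hxc i).sub_const η).pow 2
    have h := hm.mul hz2
    have heq : Φ i * (Real.exp (-Sg i * t) * (-Sg i * 1)) * (x t i - η) ^ 2
        + (1 + Φ i * Real.exp (-Sg i * t)) * ((2 : ℕ) * (x t i - η) ^ (2 - 1) * d i)
        = -(Φ i * Sg i * Real.exp (-Sg i * t)) * (x t i - η) ^ 2
        + (1 + Φ i * Real.exp (-Sg i * t)) * (2 * (x t i - η) * d i) := by
      push_cast; ring
    rwa [heq] at h
  rw [hFd.deriv]

  -- notation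
  set E := Real.exp (-δ * t) with hE
  have hE0 : 0 < E := Real.exp_pos _
  set z : Fin n → ℝ := fun i => x t i - η with hzdef
  set m : Fin n → ℝ := fun i => 1 + Φ i * Real.exp (-Sg i * t) with hmdef
  set u : Fin n → ℝ := fun i => m i * z i with hudef
  set q : Fin n → ℝ := fun j => η * (Φ j * Real.exp (-Sg j * t))
      + m j * (Real.exp (-Δ j * t) * γ j) with hqdef
  have hm1 : ∀ i, 1 ≤ m i := by
    intro i
    have h1 := Real.exp_pos (-Sg i * t)
    have h2 := hΦ i
    simp only [hmdef]
    nlinarith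
  have hm0 : ∀ i, 0 < m i := fun i => lt_of_lt_of_le one_pos (hm1 i)
  have hexple : ∀ i, Real.exp (-Sg i * t) ≤ 1 := fun i =>
    Real.exp_le_one_iff.2 (by nlinarith [hSg i])
  have hexpΔle : ∀ i, Real.exp (-Δ i * t) ≤ 1 := fun i =>
    Real.exp_le_one_iff.2 (by nlinarith [hΔ i])
  have hΦBm : ∀ i, Φ i ≤ Bm := fun i =>
    Finset.single_le_sum (fun j _ => (hΦ j).le) (Finset.mem_univ i)
  have hm2 : ∀ i, m i ≤ 1 + Bm := by
    intro i
    simp only [hmdef]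
    nlinarith [hexple i, hΦ i, hΦBm i, Real.exp_pos (-Sg i * t)]
  have hm2' : ∀ i, m i ≤ 1 + Φ i := by
    intro i
    simp only [hmdef]
    nlinarith [hexple i, hΦ i]
  -- splitting of the vector field
  have hvv : (fun j => (1 + Φ j * Real.exp (-Sg j * t)) * (x t j + Real.exp (-Δ j * t) * γ j))
      = u + (fun _ => η) + q := by
    funext j
    simp only [hudef, hmdef, hqdef, hzdef, Pi.add_apply]
    ring
  have hLconst : L.mulVec (fun _ => η) = 0 := by
    funext i
    simp only [Matrix.mulVec, dotProduct, Pi.zero_apply]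
    rw [← Finset.sum_mul, hrow i, zero_mul]
  have hdsplit : ∀ i, d i = -((L.mulVec u) i + (L.mulVec q) i) := by
    intro i
    rw [hd, hvv]
    simp only [Matrix.mulVec_add, hLconst, Pi.neg_apply, Pi.add_apply, Pi.zero_apply]
    ring
  have hB : (∑ i, m i * (2 * z i * d i))
      = -2 * (u ⬝ᵥ L.mulVec u) - 2 * (u ⬝ᵥ L.mulVec q) := by
    have h1 : ∀ i, m i * (2 * z i * d i)
        = -2 * (u i * (L.mulVec u) i) - 2 * (u i * (L.mulVec q) i) := by
      intro i
      rw [hdsplit i]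
      simp only [hudef]
      ring
    rw [Finset.sum_congr rfl fun i _ => h1 i, Finset.sum_sub_distrib,
      ← Finset.mul_sum, ← Finset.mul_sum]
    simp only [dotProduct]
  have key1 : u ⬝ᵥ (L + Lᵀ).mulVec u = 2 * (u ⬝ᵥ L.mulVec u) := by
    rw [Matrix.add_mulVec, dotProduct_add, dot_transpose]
    ring
  -- quadratic lower bound
  have hnR : (0:ℝ) < (n:ℝ) := Nat.cast_pos.2 hn
  set cval : ℝ := (∑ i, u i) / n with hcval
  set ub : Fin n → ℝ := fun i => u i - cval with hubdef
  have hubsum : ∑ i, ub i = 0 := by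
    simp only [hubdef]
    rw [Finset.sum_sub_distrib, Finset.sum_const, Finset.card_univ, Fintype.card_fin,
      nsmul_eq_mul, hcval]
    field_simp
    ring
  have hrowS : ∀ i, ∑ j, (L + Lᵀ) i j = 0 := by
    intro i
    simp only [Matrix.add_apply, Matrix.transpose_apply, Finset.sum_add_distrib,
      hrow i, hcol i, add_zero]
  have hcolS : ∀ j, ∑ i, (L + Lᵀ) i j = 0 := by
    intro j
    simp only [Matrix.add_apply, Matrix.transpose_apply, Finset.sum_add_distrib,
      hcol j, hrow j, add_zero]
  have hSconstv : (L + Lᵀ).mulVec (fun _ => cval) = 0 := by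
    funext i
    simp only [Matrix.mulVec, dotProduct, Pi.zero_apply]
    rw [← Finset.sum_mul, hrowS i, zero_mul]
  have hsumSv : ∀ w : Fin n → ℝ, ∑ i, ((L + Lᵀ).mulVec w) i = 0 := by
    intro w
    simp only [Matrix.mulVec, dotProduct]
    rw [Finset.sum_comm]
    apply Finset.sum_eq_zero
    intro j _
    rw [← Finset.sum_mul, hcolS j, zero_mul]
  have hquad : u ⬝ᵥ (L + Lᵀ).mulVec u = ub ⬝ᵥ (L + Lᵀ).mulVec ub := by
    have hu' : u = ub + (fun _ => cval) := by
      funext i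
      simp [hubdef]
    have h1 : (fun _ => cval) ⬝ᵥ (L + Lᵀ).mulVec ub = 0 := by
      simp only [dotProduct, ← Finset.mul_sum]
      rw [hsumSv ub, mul_zero]
    conv_lhs => rw [hu']
    rw [Matrix.mulVec_add, dotProduct_add, add_dotProduct, add_dotProduct, hSconstv, h1]
    simp
  have hzs : ∑ i, z i = 0 := hzsum
  have hzi : ∀ i, z i = (ub i + cval) / m i := by
    intro i
    have hui : ub i + cval = m i * z i := by
      simp [hubdef, hudef]
    rw [hui, mul_div_cancel_left₀ _ (ne_of_gt (hm0 i))]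
  have hub2nn : (0:ℝ) ≤ ∑ i, ub i ^ 2 := Finset.sum_nonneg fun i _ => sq_nonneg _
  have hKbound : ∑ i, z i ^ 2 ≤ K * ∑ i, ub i ^ 2 := by
    have hsum1m : (n:ℝ) / (1 + Bm) ≤ ∑ i, 1 / m i := by
      have h1 : ∀ i ∈ Finset.univ, 1 / (1 + Bm) ≤ 1 / m i := fun i _ =>
        one_div_le_one_div_of_le (hm0 i) (hm2 i)
      have h2 := Finset.sum_le_sum h1
      rw [Finset.sum_const, Finset.card_univ, Fintype.card_fin, nsmul_eq_mul] at h2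
      calc (n:ℝ) / (1 + Bm) = n * (1 / (1 + Bm)) := by ring
        _ ≤ ∑ i, 1 / m i := h2
    have hCS : (∑ i, ub i / m i) ^ 2 ≤ n * ∑ i, ub i ^ 2 := by
      have h1 := Finset.sum_mul_sq_le_sq_mul_sq Finset.univ (fun i => 1 / m i) ub
      have h2 : (∑ i, (1 / m i) * ub i) = ∑ i, ub i / m i :=
        Finset.sum_congr rfl fun i _ => by ring
      have h3 : (∑ i, (1 / m i) ^ 2) ≤ (n:ℝ) := by
        calc (∑ i, (1 / m i) ^ 2) ≤ ∑ _i : Fin n, (1:ℝ) := by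
              apply Finset.sum_le_sum
              intro i _
              have h4 : 1 / m i ≤ 1 := by
                rw [div_le_one (hm0 i)]
                exact hm1 i
              nlinarith [one_div_pos.2 (hm0 i)]
          _ = n := by simp
      rw [h2] at h1
      calc (∑ i, ub i / m i) ^ 2 ≤ (∑ i, (1 / m i) ^ 2) * ∑ i, ub i ^ 2 := h1
        _ ≤ n * ∑ i, ub i ^ 2 := mul_le_mul_of_nonneg_right h3 hub2nn
    have hceq : (∑ i, ub i / m i) + cval * (∑ i, 1 / m i) = 0 := by
      have h1 : ∀ i, z i = ub i / m i + cval * (1 / m i) := by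
        intro i
        rw [hzi i]
        ring
      have h2 : ∑ i, z i = (∑ i, ub i / m i) + cval * (∑ i, 1 / m i) := by
        rw [Finset.sum_congr rfl fun i _ => h1 i, Finset.sum_add_distrib, ← Finset.mul_sum]
      rw [← h2, hzs]
    have hS1nn : (0:ℝ) ≤ ∑ i, 1 / m i := le_trans (by positivity) hsum1m
    have hsq : cval ^ 2 * ((n:ℝ) / (1 + Bm)) ^ 2 ≤ (n:ℝ) * ∑ i, ub i ^ 2 := by
      have e1 : cval * (∑ i, 1 / m i) = -(∑ i, ub i / m i) := by linarith
      have e3 : cval ^ 2 * ((n:ℝ) / (1 + Bm)) ^ 2 ≤ cval ^ 2 * (∑ i, 1 / m i) ^ 2 := by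
        apply mul_le_mul_of_nonneg_left _ (sq_nonneg cval)
        exact pow_le_pow_left₀ (by positivity) hsum1m 2
      calc cval ^ 2 * ((n:ℝ) / (1 + Bm)) ^ 2 ≤ cval ^ 2 * (∑ i, 1 / m i) ^ 2 := e3
        _ = (∑ i, ub i / m i) ^ 2 := by
            rw [show (∑ i, ub i / m i) = -(cval * (∑ i, 1 / m i)) by linarith]
            ring
        _ ≤ n * ∑ i, ub i ^ 2 := hCS
    have hBm1 : (0:ℝ) < 1 + Bm := by linarith
    have hncval : (n:ℝ) * cval ^ 2 ≤ (1 + Bm) ^ 2 * ∑ i, ub i ^ 2 := by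
      have h2 := mul_le_mul_of_nonneg_right hsq
        (le_of_lt (by positivity : (0:ℝ) < (1 + Bm) ^ 2 / n))
      have e1 : cval ^ 2 * ((n:ℝ) / (1 + Bm)) ^ 2 * ((1 + Bm) ^ 2 / n)
          = (n:ℝ) * cval ^ 2 := by
        field_simp
      have e2 : ((n:ℝ) * ∑ i, ub i ^ 2) * ((1 + Bm) ^ 2 / n)
          = (1 + Bm) ^ 2 * ∑ i, ub i ^ 2 := by
        field_simp
      rw [e1, e2] at h2
      exact h2
    have hterm : ∀ i, z i ^ 2 ≤ (ub i + cval) ^ 2 := by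
      intro i
      rw [hzi i, div_pow]
      exact div_le_self (sq_nonneg _) (by nlinarith [hm1 i] : (1:ℝ) ≤ m i ^ 2)
    have hexpand : ∑ i, (ub i + cval) ^ 2 = (∑ i, ub i ^ 2) + (n:ℝ) * cval ^ 2 := by
      rw [Finset.sum_congr rfl fun i _ =>
        (by ring : (ub i + cval) ^ 2 = ub i ^ 2 + 2 * cval * ub i + cval ^ 2)]
      rw [Finset.sum_add_distrib, Finset.sum_add_distrib, ← Finset.mul_sum, hubsum,
        Finset.sum_const, Finset.card_univ, Fintype.card_fin, nsmul_eq_mul]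
      ring
    calc ∑ i, z i ^ 2 ≤ ∑ i, (ub i + cval) ^ 2 := Finset.sum_le_sum fun i _ => hterm i
      _ = (∑ i, ub i ^ 2) + (n:ℝ) * cval ^ 2 := hexpand
      _ ≤ (∑ i, ub i ^ 2) + (1 + Bm) ^ 2 * ∑ i, ub i ^ 2 := by linarith
      _ = K * ∑ i, ub i ^ 2 := by rw [hK]; ring
  have key2 : lam / K * (∑ i, z i ^ 2) ≤ u ⬝ᵥ (L + Lᵀ).mulVec u := by
    have h1 : lam * ∑ i, ub i ^ 2 ≤ ub ⬝ᵥ (L + Lᵀ).mulVec ub := hlamle ub hubsum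
    rw [hquad]
    have h2 : lam / K * (∑ i, z i ^ 2) ≤ lam / K * (K * ∑ i, ub i ^ 2) :=
      mul_le_mul_of_nonneg_left hKbound (by positivity)
    have h3 : lam / K * (K * ∑ i, ub i ^ 2) = lam * ∑ i, ub i ^ 2 := by
      field_simp
    linarith
  -- cross term bound
  have hexpSE : ∀ i, Real.exp (-Sg i * t) ≤ E := by
    intro i
    rw [hE]
    exact Real.exp_le_exp.2 (by nlinarith [hδS i])
  have hexpΔE : ∀ i, Real.exp (-Δ i * t) ≤ E := by
    intro i
    rw [hE]
    exact Real.exp_le_exp.2 (by nlinarith [hδΔ i])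
  have hqb : ∀ j, |q j| ≤ Q j * E := by
    intro j
    have e1 := Real.exp_pos (-Sg j * t)
    have e2 := Real.exp_pos (-Δ j * t)
    have a1 : |q j| ≤ |η| * (Φ j * Real.exp (-Sg j * t))
        + m j * (Real.exp (-Δ j * t) * |γ j|) := by
      calc |q j| ≤ |η * (Φ j * Real.exp (-Sg j * t))|
            + |m j * (Real.exp (-Δ j * t) * γ j)| :=
            abs_add_le (η * (Φ j * Real.exp (-Sg j * t))) (m j * (Real.exp (-Δ j * t) * γ j))
        _ = |η| * (Φ j * Real.exp (-Sg j * t)) + m j * (Real.exp (-Δ j * t) * |γ j|) := by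
            simp only [abs_mul]
            rw [abs_of_pos (hΦ j), abs_of_pos e1, abs_of_pos (hm0 j), abs_of_pos e2]
    have b1 : |η| * (Φ j * Real.exp (-Sg j * t)) ≤ |η| * Φ j * E := by
      calc |η| * (Φ j * Real.exp (-Sg j * t)) = (|η| * Φ j) * Real.exp (-Sg j * t) := by ring
        _ ≤ (|η| * Φ j) * E :=
            mul_le_mul_of_nonneg_left (hexpSE j) (mul_nonneg (abs_nonneg η) (hΦ j).le)
    have b2 : m j * (Real.exp (-Δ j * t) * |γ j|) ≤ (1 + Φ j) * |γ j| * E := by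
      have h1 : m j * (Real.exp (-Δ j * t) * |γ j|)
          ≤ (1 + Φ j) * (Real.exp (-Δ j * t) * |γ j|) :=
        mul_le_mul_of_nonneg_right (hm2' j) (by positivity)
      have h2 : (1 + Φ j) * (Real.exp (-Δ j * t) * |γ j|) ≤ (1 + Φ j) * (E * |γ j|) := by
        apply mul_le_mul_of_nonneg_left _ (by nlinarith [hΦ j])
        exact mul_le_mul_of_nonneg_right (hexpΔE j) (abs_nonneg _)
      calc m j * (Real.exp (-Δ j * t) * |γ j|) ≤ (1 + Φ j) * (E * |γ j|) := le_trans h1 h2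
        _ = (1 + Φ j) * |γ j| * E := by ring
    have hQE : Q j * E = |η| * Φ j * E + (1 + Φ j) * |γ j| * E := by
      simp only [hQ]
      ring
    rw [hQE]
    linarith
  have hLqb : ∀ i, |(L.mulVec q) i| ≤ R i * E := by
    intro i
    have hRi : R i * E = ∑ j, |L i j| * (Q j * E) := by
      simp only [hR]
      rw [Finset.sum_mul]
      exact Finset.sum_congr rfl fun j _ => by ring
    rw [hRi]
    calc |(L.mulVec q) i| = |∑ j, L i j * q j| := by
          simp only [Matrix.mulVec, dotProduct]
      _ ≤ ∑ j, |L i j * q j| := Finset.abs_sum_le_sum_abs _ _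
      _ ≤ ∑ j, |L i j| * (Q j * E) := by
          apply Finset.sum_le_sum
          intro j _
          rw [abs_mul]
          exact mul_le_mul_of_nonneg_left (hqb j) (abs_nonneg _)
  have hu2 : ∑ i, u i ^ 2 ≤ (1 + Bm) ^ 2 * ∑ i, z i ^ 2 := by
    rw [Finset.mul_sum]
    apply Finset.sum_le_sum
    intro i _
    have h1 : u i ^ 2 = m i ^ 2 * z i ^ 2 := by
      simp only [hudef]
      ring
    rw [h1]
    exact mul_le_mul_of_nonneg_right (pow_le_pow_left₀ (hm0 i).le (hm2 i) 2) (sq_nonneg _)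
  have hLq2 : ∑ i, ((L.mulVec q) i) ^ 2 ≤ (∑ i, R i ^ 2) * E ^ 2 := by
    rw [Finset.sum_mul]
    apply Finset.sum_le_sum
    intro i _
    rw [← sq_abs ((L.mulVec q) i)]
    calc |(L.mulVec q) i| ^ 2 ≤ (R i * E) ^ 2 := pow_le_pow_left₀ (abs_nonneg _) (hLqb i) 2
      _ = R i ^ 2 * E ^ 2 := by ring
  have hz2nn : (0:ℝ) ≤ ∑ i, z i ^ 2 := Finset.sum_nonneg fun i _ => sq_nonneg _
  have hR2nn : (0:ℝ) ≤ ∑ i, R i ^ 2 := Finset.sum_nonneg fun i _ => sq_nonneg _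
  have key3 : |u ⬝ᵥ L.mulVec q| ≤ (1 + Bm) * Real.sqrt (∑ i, z i ^ 2) * (CR * E) := by
    have hCSq := Finset.sum_mul_sq_le_sq_mul_sq Finset.univ u (L.mulVec q)
    have h1 : (u ⬝ᵥ L.mulVec q) ^ 2
        ≤ ((1 + Bm) ^ 2 * ∑ i, z i ^ 2) * ((∑ i, R i ^ 2) * E ^ 2) := by
      calc (u ⬝ᵥ L.mulVec q) ^ 2 = (∑ i, u i * (L.mulVec q) i) ^ 2 := rfl
        _ ≤ (∑ i, u i ^ 2) * ∑ i, ((L.mulVec q) i) ^ 2 := hCSq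
        _ ≤ _ := mul_le_mul hu2 hLq2 (Finset.sum_nonneg fun i _ => sq_nonneg _)
            (by positivity)
    rw [← Real.sqrt_sq_eq_abs]
    calc Real.sqrt ((u ⬝ᵥ L.mulVec q) ^ 2)
        ≤ Real.sqrt (((1 + Bm) ^ 2 * ∑ i, z i ^ 2) * ((∑ i, R i ^ 2) * E ^ 2)) :=
          Real.sqrt_le_sqrt h1
      _ = (1 + Bm) * Real.sqrt (∑ i, z i ^ 2) * (CR * E) := by
          rw [Real.sqrt_mul (by positivity), Real.sqrt_mul
            (by positivity : (0:ℝ) ≤ (1 + Bm) ^ 2), Real.sqrt_mul hR2nn,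
            Real.sqrt_sq (by positivity : (0:ℝ) ≤ 1 + Bm), Real.sqrt_sq hE0.le, hCR]
  -- final assembly
  have habs2 : -2 * (u ⬝ᵥ L.mulVec q) ≤ 2 * |u ⬝ᵥ L.mulVec q| := by
    have := neg_abs_le (u ⬝ᵥ L.mulVec q)
    linarith [le_abs_self (u ⬝ᵥ L.mulVec q)]
  have hsE : 0 ≤ Real.sqrt (∑ i, z i ^ 2) * E :=
    mul_nonneg (Real.sqrt_nonneg _) hE0.le
  calc (∑ i, (-(Φ i * Sg i * Real.exp (-Sg i * t)) * (x t i - η) ^ 2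
        + (1 + Φ i * Real.exp (-Sg i * t)) * (2 * (x t i - η) * d i)))
      = (∑ i, -(Φ i * Sg i * Real.exp (-Sg i * t)) * z i ^ 2)
        + (∑ i, m i * (2 * z i * d i)) := by
        rw [← Finset.sum_add_distrib]
    _ ≤ 0 + (-2 * (u ⬝ᵥ L.mulVec u) - 2 * (u ⬝ᵥ L.mulVec q)) := by
        rw [hB]
        apply add_le_add_left
        apply Finset.sum_nonpos
        intro i _
        have h1 := Real.exp_pos (-Sg i * t)
        have h2 : -(Φ i * Sg i * Real.exp (-Sg i * t)) * z i ^ 2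
            = -(Φ i * Sg i * Real.exp (-Sg i * t) * z i ^ 2) := by ring
        rw [h2, neg_nonpos]
        have h3 := hΦ i
        have h4 := hSg i
        positivity
    _ = -(u ⬝ᵥ (L + Lᵀ).mulVec u) - 2 * (u ⬝ᵥ L.mulVec q) := by
        rw [key1]
        ring
    _ ≤ -(lam / K * (∑ i, z i ^ 2)) + 2 * |u ⬝ᵥ L.mulVec q| := by
        have h1 : -(u ⬝ᵥ (L + Lᵀ).mulVec u) ≤ -(lam / K * (∑ i, z i ^ 2)) := by
          linarith [key2]
        have h2' : -(2 * (u ⬝ᵥ L.mulVec q)) ≤ 2 * |u ⬝ᵥ L.mulVec q| := by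
          linarith [habs2]
        linarith [h1, h2']
    _ ≤ -(lam / K) * (∑ i, z i ^ 2)
        + (2 * (1 + Bm) * CR + 1) * Real.sqrt (∑ i, z i ^ 2) * E + 1 * E := by
        have heq : 2 * ((1 + Bm) * Real.sqrt (∑ i, z i ^ 2) * (CR * E))
            = (2 * (1 + Bm) * CR) * (Real.sqrt (∑ i, z i ^ 2) * E) := by ring
        have h3 := key3
        nlinarith [hsE, hE0.le]
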